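/- Let n be a positive integer, let G = Z_n^M, and let A be a k × m integer matrix satisfying the columns condition over Z_n. If x_1, ..., x_m ∈ G generate a subgroup isomorphic to Z_n^m (i.e., are independent of order n), then there exist y_1, ..., y_m ∈ F(x_1, ..., x_m) with A·(y_1, ..., y_m)^T = 0 in G^k, and each y_i has order n. -/

import Mathlib

open Finset

/-- An integer `k × m` matrix satisfies the columns condition over `Z_n` if, after reordering
the columns, there are indices `0 = ks 0 < ks 1 < ... < ks t = m` such that the first block of
columns sums to `0 (mod n)` and each later block-sum is a `Z_n`-linear combination of the
preceding columns, all computations taken in `Z_n`. -/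
def ZModColumnsCondition (n : ℕ) {k m : ℕ} (A : Matrix (Fin k) (Fin m) ℤ) : Prop :=
  ∃ (σ : Equiv.Perm (Fin m)) (t : ℕ) (ks : Fin (t + 1) → ℕ),
    0 < t ∧ ks 0 = 0 ∧ ks (Fin.last t) = m ∧ StrictMono ks ∧
    (∀ r : Fin k, ∑ j ∈ univ.filter (fun j : Fin m => (j : ℕ) < ks 1),
      ((A r (σ j) : ZMod n)) = 0) ∧
    (∀ i : Fin t, (i : ℕ) ≠ 0 → ∃ c : Fin m → ZMod n, ∀ r : Fin k,
      ∑ j ∈ univ.filter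
        (fun j : Fin m => ks i.castSucc ≤ (j : ℕ) ∧ (j : ℕ) < ks i.succ),
          ((A r (σ j) : ZMod n)) =
      ∑ j ∈ univ.filter (fun j : Fin m => (j : ℕ) < ks i.castSucc),
          c j * (A r (σ j) : ZMod n))

section Aux

variable {n M m : ℕ}

/-- every vector in `(ZMod n)^M` is killed by `n`. -/
lemma aux_nsmul_zero (n M : ℕ) (v : Fin M → ZMod n) : n • v = 0 := by
  funext q
  simp [nsmul_eq_mul, ZMod.natCast_self]

/-- If the `x i` are independent of order `n` then any combination with some coefficient `1`
has additive order exactly `n`. -/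
lemma aux_order (n M m : ℕ) (hn : 0 < n) (x : Fin m → (Fin M → ZMod n))
    (hx : Function.Injective (fun c : Fin m → ZMod n => ∑ i, c i • x i))
    (cc : Fin m → ZMod n) (ι : Fin m) (hcc : cc ι = 1) :
    addOrderOf (∑ q, cc q • x q) = n := by
  set v : Fin M → ZMod n := ∑ q, cc q • x q with hv
  have hnv : n • v = 0 := aux_nsmul_zero n M v
  have hdvd : addOrderOf v ∣ n := addOrderOf_dvd_of_nsmul_eq_zero hnv
  set d := addOrderOf v with hd
  have hdv : d • v = 0 := addOrderOf_nsmul_eq_zero v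
  have hrw : d • v = ∑ q, ((d : ZMod n) * cc q) • x q := by
    rw [hv, Finset.smul_sum]
    refine Finset.sum_congr rfl fun q _ => ?_
    rw [← smul_smul, Nat.cast_smul_eq_nsmul]
  have he : (fun q => (d : ZMod n) * cc q) = 0 := by
    apply hx
    simp only
    rw [← hrw, hdv]
    simp
  have hιe : ((d : ZMod n)) = 0 := by
    have := congrFun he ι
    simpa [hcc] using this
  have hnd : n ∣ d := (ZMod.natCast_eq_zero_iff d n).mp hιe
  exact Nat.dvd_antisymm hdvd hnd

/-- rewriting `x ι + ∑_{q > ι} a q • x q` as a full combination. -/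
lemma aux_rep (n M m : ℕ) (x : Fin m → (Fin M → ZMod n)) (ι : Fin m) (aa : Fin m → ZMod n) :
    x ι + ∑ q ∈ univ.filter (fun q : Fin m => ι < q), aa q • x q
      = ∑ q : Fin m, (if q = ι then 1 else if ι < q then aa q else 0) • x q := by
  have hpt : ∀ q : Fin m, (if q = ι then (1 : ZMod n) else if ι < q then aa q else 0)
      = (if q = ι then (1 : ZMod n) else 0) + (if ι < q then aa q else 0) := by
    intro q
    by_cases h : q = ι
    · simp [h]
    · simp [h]
  calc x ι + ∑ q ∈ univ.filter (fun q : Fin m => ι < q), aa q • x q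
      = (∑ q : Fin m, (if q = ι then (1 : ZMod n) else 0) • x q)
        + ∑ q : Fin m, (if ι < q then aa q else 0) • x q := by
        congr 1
        · simp [ite_smul]
        · rw [Finset.sum_filter]
          refine Finset.sum_congr rfl fun q _ => ?_
          by_cases h : ι < q <;> simp [h]
    _ = _ := by
        rw [← Finset.sum_add_distrib]
        refine Finset.sum_congr rfl fun q _ => ?_
        rw [hpt, add_smul]

end Aux

/-- let `G = Z_n^M` and let `A` be a `k × m` integer matrix satisfying the
columns condition over `Z_n`. If `x_1, ..., x_m ∈ G` generate a subgroup isomorphic to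
`Z_n^m` (they are independent of order `n`), then there are
`y_1, ..., y_m ∈ F(x_1, ..., x_m) = {x_i + ∑_{j>i} a_j x_j}` with `A·y = 0` in `G^k`, and
each `y_i` has order `n`. -/
theorem stmt14 (n M k m : ℕ) (hn : 0 < n)
    (A : Matrix (Fin k) (Fin m) ℤ) (hA : ZModColumnsCondition n A)
    (x : Fin m → (Fin M → ZMod n))
    (hx : Function.Injective (fun c : Fin m → ZMod n => ∑ i, c i • x i)) :
    ∃ y : Fin m → (Fin M → ZMod n),
      (∀ jdx : Fin m, ∃ i : Fin m, ∃ a : Fin m → ZMod n,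
        y jdx = x i + ∑ j ∈ univ.filter (fun j : Fin m => i < j), a j • x j) ∧
      (∀ r : Fin k, ∑ j : Fin m, A r j • y j = 0) ∧
      (∀ j : Fin m, addOrderOf (y j) = n) := by
  classical
  obtain ⟨σ, t, ks, ht0, hks0, hkslast, hmono, hS1, hSi⟩ := hA
  -- the breakpoints as a function on ℕ
  set K : ℕ → ℕ := fun i => ks ⟨min i t, Nat.lt_succ_of_le (min_le_right i t)⟩ with hK
  have hK0 : K 0 = 0 := by
    have : (⟨min 0 t, Nat.lt_succ_of_le (min_le_right 0 t)⟩ : Fin (t+1)) = 0 := by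
      ext; simp
    rw [hK]; simp only [this]; exact hks0
  have hKt : K t = m := by
    have : (⟨min t t, Nat.lt_succ_of_le (min_le_right t t)⟩ : Fin (t+1)) = Fin.last t := by
      ext; simp
    rw [hK]; simp only [this]; exact hkslast
  have hKval : ∀ (i : ℕ) (hi : i ≤ t), K i = ks ⟨i, Nat.lt_succ_of_le hi⟩ := by
    intro i hi
    rw [hK]
    exact congrArg ks (Fin.ext (Nat.min_eq_left hi))
  have hKmono : Monotone K := by
    intro i i' hii
    exact (hmono.monotone (show (⟨min i t, _⟩ : Fin (t+1)) ≤ ⟨min i' t, _⟩ from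
      Fin.mk_le_mk.mpr (min_le_min hii le_rfl)))
  have hKstrict : ∀ i : ℕ, i < t → K i < K (i + 1) := by
    intro i hi
    apply hmono
    exact Fin.mk_lt_mk.mpr (by omega)
  have htm : t ≤ m := by
    have hle : ∀ i : ℕ, i ≤ t → i ≤ K i := by
      intro i
      induction i with
      | zero => intro _; omega
      | succ i ih =>
        intro hi
        have h1 := ih (by omega)
        have h2 := hKstrict i (by omega)
        omega
    have := hle t le_rfl
    omega
  -- block of a column position
  have hPdec : ∀ j : Fin m, DecidablePred (fun i : ℕ => K i ≤ (j : ℕ)) := fun _ _ => inferInstance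
  set blkN : Fin m → ℕ := fun j => Nat.findGreatest (fun i => K i ≤ (j : ℕ)) t with hblkN
  have hblkN_lt : ∀ j : Fin m, blkN j < t := by
    intro j
    have hle : blkN j ≤ t := Nat.findGreatest_le t
    rcases Nat.lt_or_ge (blkN j) t with h | h
    · exact h
    · exfalso
      have heq : blkN j = t := le_antisymm hle h
      have hspec : K (blkN j) ≤ (j : ℕ) :=
        Nat.findGreatest_spec (P := fun i => K i ≤ (j : ℕ)) (Nat.zero_le t)
          (by simp [hK0])
      rw [heq, hKt] at hspec
      exact absurd hspec (by omega)
  set blk : Fin m → Fin t := fun j => ⟨blkN j, hblkN_lt j⟩ with hblk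
  have hblk_le : ∀ j : Fin m, K (blk j).val ≤ (j : ℕ) := by
    intro j
    exact Nat.findGreatest_spec (P := fun i => K i ≤ (j : ℕ)) (Nat.zero_le t)
      (by simp [hK0])
  have hblk_lt : ∀ j : Fin m, (j : ℕ) < K ((blk j).val + 1) := by
    intro j
    by_contra hcon
    push_neg at hcon
    exact Nat.findGreatest_is_greatest (P := fun i => K i ≤ (j : ℕ))
      (by omega : blkN j < blkN j + 1) (by have := hblkN_lt j; omega) hcon
  have hblk_iff : ∀ (j : Fin m) (i : Fin t),
      blk j = i ↔ (K i.val ≤ (j : ℕ) ∧ (j : ℕ) < K (i.val + 1)) := by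
    intro j i
    constructor
    · rintro rfl
      exact ⟨hblk_le j, hblk_lt j⟩
    · rintro ⟨h1, h2⟩
      have hb1 := hblk_le j
      have hb2 := hblk_lt j
      apply Fin.ext
      rcases lt_trichotomy (blk j).val i.val with h | h | h
      · exfalso
        have : K ((blk j).val + 1) ≤ K i.val := hKmono (by omega)
        omega
      · exact h
      · exfalso
        have : K (i.val + 1) ≤ K (blk j).val := hKmono (by omega)
        omega
  have hblk_ltiff : ∀ (j : Fin m) (i : Fin t), blk j < i ↔ (j : ℕ) < K i.val := by
    intro j i
    constructor
    · intro h
      have h1 := hblk_lt j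
      have : K ((blk j).val + 1) ≤ K i.val := hKmono (by exact Fin.lt_iff_val_lt_val.mp h)
      omega
    · intro h
      by_contra hcon
      push_neg at hcon
      have : K i.val ≤ K (blk j).val := hKmono (Fin.le_iff_val_le_val.mp hcon)
      have := hblk_le j
      omega
  -- the coefficients
  have hc : ∀ i : Fin t, ∃ cc : Fin m → ZMod n, ∀ r : Fin k,
      ∑ j ∈ univ.filter (fun j : Fin m => K i.val ≤ (j : ℕ) ∧ (j : ℕ) < K (i.val + 1)),
        ((A r (σ j) : ZMod n)) =
      ∑ j ∈ univ.filter (fun j : Fin m => (j : ℕ) < K i.val), cc j * (A r (σ j) : ZMod n) := by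
    intro i
    by_cases hi0 : (i : ℕ) = 0
    · refine ⟨0, fun r => ?_⟩
      have hset : univ.filter (fun j : Fin m => K i.val ≤ (j : ℕ) ∧ (j : ℕ) < K (i.val + 1))
          = univ.filter (fun j : Fin m => (j : ℕ) < ks 1) := by
        apply Finset.filter_congr
        intro j _
        have hK1 : K 1 = ks 1 := by
          rw [hKval 1 ht0]
          congr 1
          exact Fin.ext (by simp [Fin.val_one', Nat.mod_eq_of_lt (by omega : 1 < t + 1)])
        simp [hi0, hK0, hK1]
      have hempty : univ.filter (fun j : Fin m => (j : ℕ) < K i.val) = ∅ := by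
        apply Finset.filter_false_of_mem
        intro j _
        rw [hi0, hK0]
        omega
      rw [hset, hempty, hS1 r]
      simp
    · obtain ⟨cc, hcc⟩ := hSi i hi0
      refine ⟨cc, fun r => ?_⟩
      have h1 : ks i.castSucc = K i.val :=
        ((hKval i.val (le_of_lt i.2)).trans (congrArg ks (Fin.ext rfl))).symm
      have h2 : ks i.succ = K (i.val + 1) :=
        ((hKval (i.val + 1) i.2).trans (congrArg ks (Fin.ext rfl))).symm
      simp only [← h1, ← h2]
      exact hcc r
  choose c hc' using hc
  -- the basic vectors
  set em : Fin t → Fin m := fun i => Fin.castLE htm i with hem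
  set z : Fin t → (Fin M → ZMod n) := fun i => x (em i) with hz
  -- the solution (at reordered positions)
  set w : Fin m → (Fin M → ZMod n) := fun j =>
    z (blk j) + ∑ i' ∈ univ.filter (fun i' : Fin t => blk j < i'), (-(c i' j)) • z i' with hw
  -- the key linear-algebra computation
  have key : ∀ r : Fin k, ∑ j : Fin m, (A r (σ j) : ZMod n) • w j = 0 := by
    intro r
    have expand : ∀ j : Fin m, (A r (σ j) : ZMod n) • w j
        = (A r (σ j) : ZMod n) • z (blk j)
          + ∑ i' ∈ univ.filter (fun i' : Fin t => blk j < i'),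
              (-(c i' j * (A r (σ j) : ZMod n))) • z i' := by
      intro j
      rw [hw]
      simp only
      rw [smul_add, Finset.smul_sum]
      congr 1
      refine Finset.sum_congr rfl fun i' _ => ?_
      rw [smul_smul]
      congr 1
      ring
    calc ∑ j : Fin m, (A r (σ j) : ZMod n) • w j
        = (∑ j : Fin m, (A r (σ j) : ZMod n) • z (blk j))
          + ∑ j : Fin m, ∑ i' ∈ univ.filter (fun i' : Fin t => blk j < i'),
              (-(c i' j * (A r (σ j) : ZMod n))) • z i' := by
          rw [← Finset.sum_add_distrib]
          exact Finset.sum_congr rfl fun j _ => expand j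
      _ = (∑ i : Fin t, (∑ j ∈ univ.filter (fun j : Fin m => (j : ℕ) < K i.val),
              c i j * (A r (σ j) : ZMod n)) • z i)
          + ∑ i : Fin t, (-(∑ j ∈ univ.filter (fun j : Fin m => (j : ℕ) < K i.val),
              c i j * (A r (σ j) : ZMod n))) • z i := by
          congr 1
          · rw [← Finset.sum_fiberwise_of_maps_to (fun j _ => Finset.mem_univ (blk j))
              (fun j => (A r (σ j) : ZMod n) • z (blk j))]
            refine Finset.sum_congr rfl fun i _ => ?_
            have hsame : ∑ j ∈ univ.filter (fun j : Fin m => blk j = i),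
                (A r (σ j) : ZMod n) • z (blk j)
                = ∑ j ∈ univ.filter (fun j : Fin m => blk j = i),
                    (A r (σ j) : ZMod n) • z i := by
              refine Finset.sum_congr rfl fun j hj => ?_
              rw [(Finset.mem_filter.mp hj).2]
            rw [hsame, ← Finset.sum_smul]
            have hset : univ.filter (fun j : Fin m => blk j = i)
                = univ.filter (fun j : Fin m => K i.val ≤ (j : ℕ) ∧ (j : ℕ) < K (i.val + 1)) := by
              apply Finset.filter_congr
              intro j _
              simp only [hblk_iff j i]
            rw [hset, hc' i r]
          · have hswap : ∑ j : Fin m, ∑ i' ∈ univ.filter (fun i' : Fin t => blk j < i'),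
                (-(c i' j * (A r (σ j) : ZMod n))) • z i'
                = ∑ i' : Fin t, ∑ j ∈ univ.filter (fun j : Fin m => blk j < i'),
                    (-(c i' j * (A r (σ j) : ZMod n))) • z i' := by
              simp only [Finset.sum_filter]
              exact Finset.sum_comm
            rw [hswap]
            refine Finset.sum_congr rfl fun i' _ => ?_
            have hset : univ.filter (fun j : Fin m => blk j < i')
                = univ.filter (fun j : Fin m => (j : ℕ) < K i'.val) := by
              apply Finset.filter_congr
              intro j _
              simp only [hblk_ltiff j i']
            rw [hset, ← Finset.sum_smul, ← Finset.sum_neg_distrib]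
      _ = ∑ i : Fin t, ((∑ j ∈ univ.filter (fun j : Fin m => (j : ℕ) < K i.val),
              c i j * (A r (σ j) : ZMod n))
            + (-(∑ j ∈ univ.filter (fun j : Fin m => (j : ℕ) < K i.val),
              c i j * (A r (σ j) : ZMod n)))) • z i := by
          rw [← Finset.sum_add_distrib]
          exact Finset.sum_congr rfl fun i _ => (add_smul _ _ _).symm
      _ = 0 := by
          refine Finset.sum_eq_zero fun i _ => ?_
          rw [add_neg_cancel, zero_smul]
  -- the coefficients for the F-form
  set aa : Fin m → Fin m → ZMod n := fun j q =>
    if hq : (q : ℕ) < t then (if blk j < (⟨(q : ℕ), hq⟩ : Fin t) then -(c ⟨(q : ℕ), hq⟩ j) else 0)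
    else 0 with haa
  have hem_inj : Function.Injective em := Fin.castLE_injective htm
  have hwF : ∀ j : Fin m, w j = x (em (blk j))
      + ∑ q ∈ univ.filter (fun q : Fin m => em (blk j) < q), aa j q • x q := by
    intro j
    rw [hw]
    simp only
    congr 1
    have hsumfull : ∑ q ∈ univ.filter (fun q : Fin m => em (blk j) < q), aa j q • x q
        = ∑ q : Fin m, (if em (blk j) < q then aa j q • x q else 0) := by
      rw [Finset.sum_filter]
    rw [hsumfull]
    have hmap : ∑ q : Fin m, (if em (blk j) < q then aa j q • x q else 0)
        = ∑ q ∈ (univ : Finset (Fin t)).map ⟨em, hem_inj⟩,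
            (if em (blk j) < q then aa j q • x q else 0) := by
      symm
      apply Finset.sum_subset (Finset.subset_univ _)
      intro q _ hq
      have hqt : ¬ ((q : ℕ) < t) := by
        intro hlt
        apply hq
        rw [Finset.mem_map]
        exact ⟨⟨(q : ℕ), hlt⟩, Finset.mem_univ _, Fin.ext rfl⟩
      rw [haa]
      simp [hqt]
    rw [hmap, Finset.sum_map, Finset.sum_filter]
    refine Finset.sum_congr rfl fun i' _ => ?_
    simp only [Function.Embedding.coeFn_mk]
    have hlt_iff : em (blk j) < em i' ↔ blk j < i' := by
      simp only [hem, Fin.lt_def, Fin.coe_castLE]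
    have hq : ((em i' : Fin m) : ℕ) < t := by
      simp [hem]
    have hmk : (⟨((em i' : Fin m) : ℕ), hq⟩ : Fin t) = i' := Fin.ext rfl
    have haav : aa j (em i') = (if blk j < i' then -(c i' j) else 0) := by
      rw [haa]
      simp only
      rw [dif_pos hq, hmk]
    by_cases h : blk j < i'
    · rw [if_pos h, if_pos (hlt_iff.mpr h), haav, if_pos h]
    · rw [if_neg h, if_neg (fun hcon => h (hlt_iff.mp hcon))]
  refine ⟨fun col => w (σ.symm col), ?_, ?_, ?_⟩
  · intro jdx
    exact ⟨em (blk (σ.symm jdx)), aa (σ.symm jdx), hwF (σ.symm jdx)⟩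
  · intro r
    show ∑ col : Fin m, A r col • w (σ.symm col) = 0
    have hre : ∑ col : Fin m, A r col • w (σ.symm col)
        = ∑ j : Fin m, (A r (σ j) : ZMod n) • w j := by
      rw [← Equiv.sum_comp σ (fun col => A r col • w (σ.symm col))]
      refine Finset.sum_congr rfl fun j _ => ?_
      rw [Equiv.symm_apply_apply]
      exact (Int.cast_smul_eq_zsmul (ZMod n) _ _).symm
    exact hre.trans (key r)
  · intro col
    show addOrderOf (w (σ.symm col)) = n
    rw [hwF (σ.symm col), aux_rep n M m x (em (blk (σ.symm col))) (aa (σ.symm col))]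
    exact aux_order n M m hn x hx _ (em (blk (σ.symm col))) (by simp)
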